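/- Let G be a connected simple graph on n ≥ 3 vertices. Then v(G) ≤ ⌊(n−1)/2⌋, where v(G) is the minimum cardinality of an independent set A of G such that N_G(A) is a vertex cover of G. -/
import Mathlib

open MvPolynomial

namespace PaperRV

variable {V : Type*}

/-- `A` is an independent set of `G`. -/
def IsIndep (G : SimpleGraph V) (A : Set V) : Prop :=
  ∀ u ∈ A, ∀ v ∈ A, ¬ G.Adj u v

/-- The neighbourhood `N_G(A)` of a set of vertices `A`. -/
def nbhd (G : SimpleGraph V) (A : Set V) : Set V :=
  {v | ∃ u ∈ A, G.Adj u v}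

/-- `C` is a vertex cover of `G`. -/
def IsVertexCover (G : SimpleGraph V) (C : Set V) : Prop :=
  ∀ ⦃u v⦄, G.Adj u v → u ∈ C ∨ v ∈ C

/-- The v-number of (the edge ideal of) `G`: the minimum cardinality of an independent
set `A` such that `N_G(A)` is a vertex cover of `G`. -/
noncomputable def vNumber (G : SimpleGraph V) [Fintype V] : ℕ :=
  sInf {k | ∃ A : Finset V, IsIndep G ↑A ∧ IsVertexCover G (nbhd G ↑A) ∧ A.card = k}

/-- In any finite vertex set `B` there is an independent subset of maximum cardinality. -/
lemma exists_max_indep (G : SimpleGraph V) [Fintype V] (B : Finset V) :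
    ∃ S : Finset V, S ⊆ B ∧ IsIndep G ↑S ∧
      ∀ T : Finset V, T ⊆ B → IsIndep G ↑T → T.card ≤ S.card := by
  classical
  have hne : (B.powerset.filter (fun (S : Finset V) => IsIndep G (↑S : Set V))).Nonempty := by
    refine ⟨∅, ?_⟩
    simp [IsIndep]
  obtain ⟨S, hS, hmax⟩ := Finset.exists_max_image _ Finset.card hne
  simp only [Finset.mem_filter, Finset.mem_powerset] at hS
  refine ⟨S, hS.1, hS.2, fun T hT hTind => ?_⟩
  exact hmax T (by simp [Finset.mem_filter, Finset.mem_powerset, hT, hTind])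

/-- A maximum independent set yields a valid pair, so the defining set of `vNumber`
is nonempty. -/
lemma valid_nonempty (G : SimpleGraph V) [Fintype V] :
    {k | ∃ A : Finset V, IsIndep G ↑A ∧ IsVertexCover G (nbhd G ↑A) ∧ A.card = k}.Nonempty := by
  classical
  obtain ⟨S, -, hSind, hSmax⟩ := exists_max_indep G Finset.univ
  refine ⟨S.card, S, hSind, ?_, rfl⟩
  intro x y hxy
  by_cases hx : x ∈ S
  · exact Or.inr ⟨x, by simpa using hx, hxy⟩
  · left
    -- insert x S is not independent, so x has a neighbour in S
    have hcard : ¬ (insert x S).card ≤ S.card := by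
      rw [Finset.card_insert_of_notMem hx]; omega
    have hnotind : ¬ IsIndep G ↑(insert x S) := fun h =>
      hcard (hSmax _ (Finset.subset_univ _) h)
    by_contra hxn
    apply hnotind
    intro u hu v hv hadj
    simp only [Finset.coe_insert, Set.mem_insert_iff, Finset.mem_coe] at hu hv
    rcases hu with rfl | hu
    · rcases hv with rfl | hv
      · exact G.irrefl hadj
      · exact hxn ⟨v, hv, hadj.symm⟩
    · rcases hv with rfl | hv
      · exact hxn ⟨u, hu, hadj⟩
      · exact hSind u hu v hv hadj

/-- For a connected graph `G` on `n ≥ 3` vertices, `v(G) ≤ ⌊(n - 1) / 2⌋`. -/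
theorem stmt2 {V : Type*} [Fintype V] (G : SimpleGraph V) (hn : 3 ≤ Fintype.card V)
    (hG : G.Connected) :
    vNumber G ≤ (Fintype.card V - 1) / 2 := by
  classical
  set n := Fintype.card V with hn_def
  have hne := valid_nonempty G
  have hmem := Nat.sInf_mem hne
  obtain ⟨A, hAind, hAcov, hAcard⟩ := hmem
  have hAcard : A.card = vNumber G := hAcard
  set k := vNumber G with hk_def
  have hk_min : ∀ m ∈ {k | ∃ A : Finset V, IsIndep G ↑A ∧ IsVertexCover G (nbhd G ↑A) ∧ A.card = k},
      k ≤ m := fun m hm => Nat.sInf_le hm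
  by_contra hlt
  push_neg at hlt
  have h2k : n ≤ 2 * k := by omega
  have hk2 : 2 ≤ k := by omega
  -- every a ∈ A has a private witness u with A \ {a} not working
  have hwit : ∀ a, a ∈ A → ∃ u, G.Adj a u ∧ u ∉ nbhd G ↑(A.erase a) := by
    intro a ha
    by_contra hcon
    push_neg at hcon
    have hind : IsIndep G ↑(A.erase a) := by
      intro x hx y hy
      exact hAind x (Finset.mem_of_mem_erase (by exact_mod_cast hx)) y
        (Finset.mem_of_mem_erase (by exact_mod_cast hy))
    have hcov : IsVertexCover G (nbhd G ↑(A.erase a)) := by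
      intro x y hxy
      rcases hAcov hxy with hx | hy
      · obtain ⟨b, hb, hadj⟩ := hx
        rcases eq_or_ne b a with rfl | hba
        · exact Or.inl (hcon x hadj)
        · exact Or.inl ⟨b, Finset.mem_coe.mpr (Finset.mem_erase.mpr ⟨hba, Finset.mem_coe.mp hb⟩), hadj⟩
      · obtain ⟨b, hb, hadj⟩ := hy
        rcases eq_or_ne b a with rfl | hba
        · exact Or.inr (hcon y hadj)
        · exact Or.inr ⟨b, Finset.mem_coe.mpr (Finset.mem_erase.mpr ⟨hba, Finset.mem_coe.mp hb⟩), hadj⟩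
    have hle : k ≤ (A.erase a).card := hk_min _ ⟨A.erase a, hind, hcov, rfl⟩
    have hcd : (A.erase a).card = k - 1 := by
      rw [Finset.card_erase_of_mem ha, hAcard]
    omega
  have hVne : Nonempty V := Fintype.card_pos_iff.mp (by omega)
  choose! u hu1 hu2 using hwit
  -- u maps A injectively into Aᶜ
  have huA : ∀ a ∈ A, u a ∉ A := by
    intro a ha hmem
    exact hAind a ha (u a) hmem (hu1 a ha)
  have hinj : Set.InjOn u ↑A := by
    intro a ha b hb hab
    by_contra hne'
    exact hu2 b (Finset.mem_coe.mp hb) ⟨a, Finset.mem_coe.mpr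
      (Finset.mem_erase.mpr ⟨hne', Finset.mem_coe.mp ha⟩), hab ▸ hu1 a (Finset.mem_coe.mp ha)⟩
  have hsub : A.image u ⊆ Aᶜ := by
    intro x hx
    obtain ⟨a, ha, rfl⟩ := Finset.mem_image.mp hx
    simpa using huA a ha
  have hcard_image : (A.image u).card = k := by
    rw [Finset.card_image_of_injOn hinj, hAcard]
  have hcompl : (Aᶜ : Finset V).card = n - k := by
    rw [Finset.card_compl, hAcard]
  have hkn : k ≤ n - k := by
    have := Finset.card_le_card hsub
    omega
  have hnk : n = 2 * k := by omega
  have hBeq : A.image u = Aᶜ := by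
    apply Finset.eq_of_subset_of_card_le hsub
    omega
  -- every vertex outside A has a unique neighbour in A
  have huniq : ∀ b, b ∉ A → ∀ a ∈ A, G.Adj a b → b = u a := by
    intro b hb a ha hadj
    have hbB : b ∈ A.image u := by rw [hBeq]; simpa using hb
    obtain ⟨a₀, ha₀, rfl⟩ := Finset.mem_image.mp hbB
    rcases eq_or_ne a a₀ with rfl | hne'
    · rfl
    · exact absurd ⟨a, Finset.mem_coe.mpr (Finset.mem_erase.mpr ⟨hne', ha⟩), hadj⟩ (hu2 a₀ ha₀)
  -- the complement of A contains an edge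
  have hBedge : ∃ x ∉ A, ∃ y ∉ A, G.Adj x y := by
    by_contra hcon
    push_neg at hcon
    -- then G is a perfect matching, contradicting connectivity with k ≥ 2
    obtain ⟨a, ha, a', ha', haa'⟩ := Finset.one_lt_card.mp (by omega : 1 < A.card)
    set C : Set V := {a, u a} with hC
    have hclosed : ∀ x ∈ C, ∀ y, G.Adj x y → y ∈ C := by
      intro x hx y hadj
      rcases hx with rfl | hx
      · -- x = a
        have hyA : y ∉ A := fun hy => hAind x ha y hy hadj
        right
        exact (huniq y hyA x ha hadj).symm ▸ rfl
      · -- x = u a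
        rcases Set.mem_singleton_iff.mp hx with rfl
        have hyA : y ∈ A := by
          by_contra hy
          exact hcon (u a) (huA a ha) y hy hadj
        left
        have := huniq (u a) (huA a ha) y hyA hadj.symm
        -- u a = u y, with a, y ∈ A, injectivity gives y = a
        exact (hinj (by exact_mod_cast hyA) (by exact_mod_cast ha) this.symm)
    have hwalk : ∀ (x y : V), G.Walk x y → x ∈ C → y ∈ C := by
      intro x y p
      induction p with
      | nil => exact id
      | cons h p ih => intro hx; exact ih (hclosed _ hx _ h)
    have ha'C : a' ∈ C := hwalk a a' (hG.preconnected a a').some (Or.inl rfl)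
    rcases ha'C with h | h
    · exact haa' h.symm
    · exact huA a ha (h ▸ ha')
  -- take a maximum independent subset S of Aᶜ
  obtain ⟨S, hSsub, hSind, hSmax⟩ := exists_max_indep G Aᶜ
  obtain ⟨x₀, hx₀, y₀, hy₀, hxy₀⟩ := hBedge
  have hSne : S ≠ Aᶜ := by
    rintro rfl
    exact hSind x₀ (by simpa using hx₀) y₀ (by simpa using hy₀) hxy₀
  have hScard : S.card ≤ k - 1 := by
    have h1 : S.card ≤ (Aᶜ : Finset V).card := Finset.card_le_card hSsub
    have h2 : S.card ≠ (Aᶜ : Finset V).card := by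
      intro h
      exact hSne (Finset.eq_of_subset_of_card_le hSsub (le_of_eq h.symm))
    omega
  -- S dominates Aᶜ \ S
  have hSdom : ∀ x ∉ A, x ∉ S → ∃ s ∈ S, G.Adj s x := by
    intro x hxA hxS
    by_contra hcon
    push_neg at hcon
    have hins : IsIndep G ↑(insert x S) := by
      intro p hp q hq hadj
      simp only [Finset.coe_insert, Set.mem_insert_iff, Finset.mem_coe] at hp hq
      rcases hp with rfl | hp
      · rcases hq with rfl | hq
        · exact G.irrefl hadj
        · exact hcon q hq hadj.symm
      · rcases hq with rfl | hq
        · exact hcon p hp hadj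
        · exact hSind p hp q hq hadj
    have hle : (insert x S).card ≤ S.card :=
      hSmax _ (Finset.insert_subset (by simpa using hxA) hSsub) hins
    rw [Finset.card_insert_of_notMem hxS] at hle
    omega
  -- S is a valid pair of size ≤ k - 1, contradiction
  have hScov : IsVertexCover G (nbhd G ↑S) := by
    intro x y hxy
    by_cases hxA : x ∈ A
    · by_cases hyA : y ∈ A
      · exact absurd hxy (hAind x hxA y hyA)
      · by_cases hyS : y ∈ S
        · exact Or.inl ⟨y, by exact_mod_cast hyS, hxy.symm⟩
        · obtain ⟨s, hs, hadj⟩ := hSdom y hyA hyS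
          exact Or.inr ⟨s, by exact_mod_cast hs, hadj⟩
    · by_cases hxS : x ∈ S
      · exact Or.inr ⟨x, by exact_mod_cast hxS, hxy⟩
      · obtain ⟨s, hs, hadj⟩ := hSdom x hxA hxS
        exact Or.inl ⟨s, by exact_mod_cast hs, hadj⟩
  have := hk_min _ ⟨S, hSind, hScov, rfl⟩
  omega

end PaperRV
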